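/- Consider the single-node general discrete model over horizon n. Define the greedy policy F* by: at slot k, given available energy U_k = m, transmit F*_k = q units where q ∈ {0,1,…,m} attains the maximum of log(1+j·h_k) + γ_{k+1}^{m−j} over j ∈ {0,1,…,m} (with the convention γ_{n+1}^j := 0 for all j). Then F* is admissible and maximizes the expected total payoff: P(F) ≤ P(F*) for every admissible policy F. -/

import Mathlib

open MeasureTheory ProbabilityTheory

namespace EHDiscrete

variable {Ω : Type*} [MeasurableSpace Ω]

/-- Carryover energy: `c 0 = 0`, `c k = min (c (k-1) + E k) B - F k`. -/
def carry (B : ℕ) (Earr F : ℕ → Ω → ℕ) : ℕ → Ω → ℕ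
  | 0 => fun _ => 0
  | k + 1 => fun ω => min (carry B Earr F k ω + Earr (k + 1) ω) B - F (k + 1) ω

/-- Available energy `U_k = min (c_{k-1} + E_k) B`. -/
def avail (B : ℕ) (Earr F : ℕ → Ω → ℕ) (k : ℕ) (ω : Ω) : ℕ :=
  min (carry B Earr F (k - 1) ω + Earr k ω) B

/-- The σ-algebra generated by the history `(E_1, …, E_k, h_1, …, h_k)`. -/
def hist (Earr : ℕ → Ω → ℕ) (h : ℕ → Ω → ℝ) (k : ℕ) : MeasurableSpace Ω :=
  MeasurableSpace.comap
    (fun ω => ((fun i : Fin k => Earr (i.1 + 1) ω), (fun i : Fin k => h (i.1 + 1) ω)))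
    inferInstance

/-- Admissible policy (general discrete consumption): `F_k ≤ U_k`
(hence `F_k ∈ {0, …, B}`), and `F_k` is a measurable function of
`(E_1, …, E_k, h_1, …, h_k)`. -/
def IsPolicy (n B : ℕ) (Earr : ℕ → Ω → ℕ) (h : ℕ → Ω → ℝ) (F : ℕ → Ω → ℕ) : Prop :=
  (∀ k, 1 ≤ k → k ≤ n → ∀ ω, F k ω ≤ avail B Earr F k ω) ∧
  (∀ k, 1 ≤ k → k ≤ n → Measurable[hist Earr h k] (F k))

/-- Expected total payoff `P(F) = E [∑_{k=1}^n log (1 + F_k h_k)]`. -/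
noncomputable def payoff (μ : Measure Ω) (n : ℕ) (h : ℕ → Ω → ℝ) (F : ℕ → Ω → ℕ) : ℝ :=
  ∫ ω, ∑ k ∈ Finset.Icc 1 n, Real.log (1 + (F k ω : ℝ) * h k ω) ∂μ

/-- `α^m(x) = max_{j ∈ {0, …, m}} (log (1 + j·x) + g (m - j))`. -/
noncomputable def alphaD (g : ℕ → ℝ) (m : ℕ) (x : ℝ) : ℝ :=
  (Finset.range (m + 1)).sup' (Finset.nonempty_range_iff.mpr (Nat.succ_ne_zero m))
    (fun j => Real.log (1 + (j : ℝ) * x) + g (m - j))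

/-- Values, indexed backwards: `gAuxD φ B pr j m = γ_{n-j}^m`, where
`γ_n^m = E[log (1 + h·min (m + E) B)]` and, for `k < n`,
`γ_k^m = ∑_{i=0}^{B-m-1} p_i E[α_{k+1}^{i+m}] + (∑_{i=B-m}^B p_i) E[α_{k+1}^B]`. -/
noncomputable def gAuxD (φ : Measure ℝ) (B : ℕ) (pr : ℕ → ℝ) : ℕ → ℕ → ℝ
  | 0, m => ∑ i ∈ Finset.range (B + 1),
      pr i * ∫ x, Real.log (1 + x * ((min (m + i) B : ℕ) : ℝ)) ∂φ
  | j + 1, m =>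
      (∑ i ∈ Finset.range (B - m),
        pr i * ∫ x, alphaD (fun l => gAuxD φ B pr j l) (i + m) x ∂φ)
        + (∑ i ∈ Finset.Icc (B - m) B, pr i)
          * ∫ x, alphaD (fun l => gAuxD φ B pr j l) B x ∂φ

/-- `γ_k^m` for slots `1 ≤ k ≤ n`, with the convention `γ_k^m = 0` for `k > n`. -/
noncomputable def gammaSlotD (n : ℕ) (φ : Measure ℝ) (B : ℕ) (pr : ℕ → ℝ) (k m : ℕ) : ℝ :=
  if k ≤ n then gAuxD φ B pr (n - k) m else 0

/-- A policy is greedy if, at each slot, the transmitted amount attains the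
maximum of `log (1 + j·h_k) + γ_{k+1}^{U_k - j}` over `j ∈ {0, …, U_k}`. -/
def IsGreedy (n B : ℕ) (φ : Measure ℝ) (pr : ℕ → ℝ) (Earr : ℕ → Ω → ℕ)
    (h : ℕ → Ω → ℝ) (F : ℕ → Ω → ℕ) : Prop :=
  ∀ k, 1 ≤ k → k ≤ n → ∀ ω, ∀ j ≤ avail B Earr F k ω,
    Real.log (1 + (j : ℝ) * h k ω) + gammaSlotD n φ B pr (k + 1) (avail B Earr F k ω - j)
      ≤ Real.log (1 + (F k ω : ℝ) * h k ω)
        + gammaSlotD n φ B pr (k + 1) (avail B Earr F k ω - F k ω)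

section Aux

variable {Earr : ℕ → Ω → ℕ} {h : ℕ → Ω → ℝ}

lemma le_alphaD (g : ℕ → ℝ) (m : ℕ) (x : ℝ) {j : ℕ} (hj : j ≤ m) :
    Real.log (1 + (j : ℝ) * x) + g (m - j) ≤ alphaD g m x := by
  exact Finset.le_sup' (fun j : ℕ => Real.log (1 + (j : ℝ) * x) + g (m - j))
    (Finset.mem_range.mpr (Nat.lt_succ_of_le hj))

lemma alphaD_le (g : ℕ → ℝ) (m : ℕ) (x : ℝ) {c : ℝ}
    (hc : ∀ j ≤ m, Real.log (1 + (j : ℝ) * x) + g (m - j) ≤ c) :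
    alphaD g m x ≤ c :=
  Finset.sup'_le _ _ fun j hj => hc j (Nat.lt_succ_iff.mp (Finset.mem_range.mp hj))

lemma alphaD_eq_sup' (g : ℕ → ℝ) (m : ℕ) :
    alphaD g m = (Finset.range (m + 1)).sup'
      (Finset.nonempty_range_iff.mpr (Nat.succ_ne_zero m))
      (fun j x => Real.log (1 + (j : ℝ) * x) + g (m - j)) := by
  funext x
  rw [Finset.sup'_apply]
  rfl

lemma measurable_alphaD (g : ℕ → ℝ) (m : ℕ) : Measurable (alphaD g m) := by
  rw [alphaD_eq_sup']
  refine Finset.measurable_sup' _ fun j _ => ?_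
  exact (Real.measurable_log.comp (measurable_const.add (measurable_const.mul measurable_id))).add
    measurable_const

lemma integrable_sup' {α : Type*} [MeasurableSpace α] {μ : Measure α} {ι : Type*}
    {s : Finset ι} (hs : s.Nonempty) {F : ι → α → ℝ}
    (hF : ∀ i ∈ s, Integrable (F i) μ) : Integrable (s.sup' hs F) μ :=
  Finset.sup'_induction (p := fun f => Integrable f μ) hs F
    (fun f hf g hg => Integrable.sup hf hg) hF

lemma alphaD_zero_of_nonneg (m : ℕ) {x : ℝ} (hx : 0 ≤ x) :
    alphaD (fun _ => 0) m x = Real.log (1 + (m : ℝ) * x) := by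
  refine le_antisymm (alphaD_le _ _ _ fun j hj => ?_) ?_
  · simp only [add_zero]
    refine Real.log_le_log (by positivity) ?_
    have : (j:ℝ) ≤ (m:ℝ) := Nat.cast_le.mpr hj
    nlinarith
  · simpa using le_alphaD (fun _ => 0) m x (le_refl m)

section Integrability

variable {φ : Measure ℝ} [IsProbabilityMeasure φ] {B : ℕ}

lemma integrable_log_one_add (hφ : ∀ᵐ x ∂φ, 0 ≤ x)
    (hint : Integrable (fun x => Real.log (1 + (B : ℝ) * x)) φ)
    {j : ℕ} (hj : j ≤ B) : Integrable (fun x => Real.log (1 + (j : ℝ) * x)) φ := by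
  refine hint.mono' ?_ ?_
  · exact (Real.measurable_log.comp
      (measurable_const.add (measurable_const.mul measurable_id))).aestronglyMeasurable
  · filter_upwards [hφ] with x hx
    have h1 : (0:ℝ) ≤ (j:ℝ) * x := by positivity
    have h2 : (j:ℝ) * x ≤ (B:ℝ) * x := by
      have : (j:ℝ) ≤ (B:ℝ) := Nat.cast_le.mpr hj
      nlinarith
    rw [Real.norm_eq_abs, abs_of_nonneg (Real.log_nonneg (by linarith))]
    have hb : (0:ℝ) ≤ Real.log (1 + (B:ℝ) * x) := Real.log_nonneg (by linarith)
    exact Real.log_le_log (by linarith) (by linarith)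

lemma integrable_alphaD (hφ : ∀ᵐ x ∂φ, 0 ≤ x)
    (hint : Integrable (fun x => Real.log (1 + (B : ℝ) * x)) φ)
    (g : ℕ → ℝ) {m : ℕ} (hm : m ≤ B) : Integrable (alphaD g m) φ := by
  rw [alphaD_eq_sup']
  refine integrable_sup' _ fun j hj => ?_
  have hj' : j ≤ B := le_trans (Nat.lt_succ_iff.mp (Finset.mem_range.mp hj)) hm
  exact (integrable_log_one_add hφ hint hj').add (integrable_const _)

end Integrability

section Hist

variable {Earr : ℕ → Ω → ℕ} {h : ℕ → Ω → ℝ}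

lemma measurable_histmap (k : ℕ) :
    Measurable[hist Earr h k]
      (fun ω => ((fun i : Fin k => Earr (i.1 + 1) ω), (fun i : Fin k => h (i.1 + 1) ω))) :=
  Measurable.of_comap_le le_rfl

lemma hist_le (hEm : ∀ k, Measurable (Earr k)) (hhm : ∀ k, Measurable (h k)) (k : ℕ) :
    hist Earr h k ≤ ‹MeasurableSpace Ω› := by
  refine Measurable.comap_le ?_
  exact Measurable.prod (measurable_pi_lambda _ fun i => hEm _)
    (measurable_pi_lambda _ fun i => hhm _)

lemma hist_mono {k l : ℕ} (hkl : k ≤ l) : hist Earr h k ≤ hist Earr h l := by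
  have : (fun ω => ((fun i : Fin k => Earr (i.1 + 1) ω), (fun i : Fin k => h (i.1 + 1) ω)))
      = (fun p : (Fin l → ℕ) × (Fin l → ℝ) =>
          ((fun i : Fin k => p.1 ⟨i.1, lt_of_lt_of_le i.2 hkl⟩),
           (fun i : Fin k => p.2 ⟨i.1, lt_of_lt_of_le i.2 hkl⟩)))
        ∘ (fun ω => ((fun i : Fin l => Earr (i.1 + 1) ω), (fun i : Fin l => h (i.1 + 1) ω))) := rfl
  unfold hist
  rw [this, ← MeasurableSpace.comap_comp]
  refine MeasurableSpace.comap_mono ?_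
  refine Measurable.comap_le ?_
  exact Measurable.prod
    (measurable_pi_lambda _ fun i => measurable_fst.eval)
    (measurable_pi_lambda _ fun i => measurable_snd.eval)

lemma measurable_Earr_hist {k : ℕ} (hk : 1 ≤ k) : Measurable[hist Earr h k] (Earr k) := by
  have : Earr k = (fun p : (Fin k → ℕ) × (Fin k → ℝ) => p.1 ⟨k - 1, by omega⟩)
      ∘ (fun ω => ((fun i : Fin k => Earr (i.1 + 1) ω), (fun i : Fin k => h (i.1 + 1) ω))) := by
    funext ω
    simp only [Function.comp_apply]
    congr 1
    omega
  rw [this]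
  exact ((measurable_pi_apply _).comp measurable_fst).comp (measurable_histmap k)

lemma measurable_h_hist {k : ℕ} (hk : 1 ≤ k) : Measurable[hist Earr h k] (h k) := by
  have : h k = (fun p : (Fin k → ℕ) × (Fin k → ℝ) => p.2 ⟨k - 1, by omega⟩)
      ∘ (fun ω => ((fun i : Fin k => Earr (i.1 + 1) ω), (fun i : Fin k => h (i.1 + 1) ω))) := by
    funext ω
    simp only [Function.comp_apply]
    congr 1
    omega
  rw [this]
  exact ((measurable_pi_apply _).comp measurable_snd).comp (measurable_histmap k)

lemma indepFun_mono {β γ β' γ' : Type*} [MeasurableSpace β] [MeasurableSpace γ]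
    [MeasurableSpace β'] [MeasurableSpace γ'] {μ : Measure Ω}
    {f : Ω → β} {g : Ω → γ} {f' : Ω → β'} {g' : Ω → γ'}
    (hfg : IndepFun f g μ)
    (h1 : MeasurableSpace.comap f' inferInstance ≤ MeasurableSpace.comap f inferInstance)
    (h2 : MeasurableSpace.comap g' inferInstance ≤ MeasurableSpace.comap g inferInstance) :
    IndepFun f' g' μ :=
  Kernel.indep_of_indep_of_le_left (Kernel.indep_of_indep_of_le_right hfg h2) h1

lemma indep_hist_pair {n k : ℕ} (hk1 : 1 ≤ k) (hkn : k ≤ n) {μ : Measure Ω}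
    (hEm : ∀ k, Measurable (Earr k)) (hhm : ∀ k, Measurable (h k))
    (hindep : iIndepFun
      (fun (k : Fin n) ω => (Earr (k.1 + 1) ω, h (k.1 + 1) ω)) μ)
    {c : Ω → ℕ} (hc : Measurable[hist Earr h (k - 1)] c) :
    IndepFun c (fun ω => (Earr k ω, h k ω)) μ := by
  classical
  set X : Fin n → Ω → ℕ × ℝ := fun i ω => (Earr (i.1 + 1) ω, h (i.1 + 1) ω) with hX
  have hXm : ∀ i, Measurable (X i) := fun i => (hEm _).prodMk (hhm _)
  set S : Finset (Fin n) := Finset.univ.filter (fun i : Fin n => i.1 < k - 1) with hS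
  set T : Finset (Fin n) := {⟨k - 1, by omega⟩} with hT
  have hST : Disjoint S T := by
    simp only [hS, hT, Finset.disjoint_singleton_right, Finset.mem_filter]
    omega
  have hbig := hindep.indepFun_finset S T hST hXm
  refine indepFun_mono hbig ?_ ?_
  · -- comap c ≤ comap (S-tuple)
    refine le_trans (Measurable.comap_le hc) ?_
    have heq : (fun ω => ((fun i : Fin (k-1) => Earr (i.1 + 1) ω),
        (fun i : Fin (k-1) => h (i.1 + 1) ω)))
        = (fun v : S → ℕ × ℝ =>
            ((fun i : Fin (k-1) => (v ⟨⟨i.1, by omega⟩, by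
                simp only [hS, Finset.mem_filter, Finset.mem_univ, true_and]; exact i.2⟩).1),
             (fun i : Fin (k-1) => (v ⟨⟨i.1, by omega⟩, by
                simp only [hS, Finset.mem_filter, Finset.mem_univ, true_and]; exact i.2⟩).2)))
          ∘ (fun ω (i : S) => X i.1 ω) := rfl
    unfold hist
    rw [heq, ← MeasurableSpace.comap_comp]
    refine le_trans (MeasurableSpace.comap_mono (Measurable.comap_le ?_)) le_rfl
    exact Measurable.prod
      (measurable_pi_lambda _ fun i => measurable_fst.comp (measurable_pi_apply _))
      (measurable_pi_lambda _ fun i => measurable_snd.comp (measurable_pi_apply _))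
  · -- comap pair ≤ comap (T-tuple)
    have heq : (fun ω => (Earr k ω, h k ω))
        = (fun v : T → ℕ × ℝ => v ⟨⟨k - 1, by omega⟩, Finset.mem_singleton_self _⟩)
          ∘ (fun ω (i : T) => X i.1 ω) := by
      funext ω
      simp only [Function.comp_apply, hX]
      congr 1 <;> · congr 1; omega
    rw [heq, ← MeasurableSpace.comap_comp]
    exact MeasurableSpace.comap_mono (Measurable.comap_le (measurable_pi_apply _))

end Hist

section Carry

variable {Earr : ℕ → Ω → ℕ} {h : ℕ → Ω → ℝ}

lemma carry_le_B (B : ℕ) (F : ℕ → Ω → ℕ) (k : ℕ) (ω : Ω) : carry B Earr F k ω ≤ B := by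
  cases k with
  | zero => simp [carry]
  | succ k => simp only [carry]; omega

lemma avail_le_B (B : ℕ) (F : ℕ → Ω → ℕ) (k : ℕ) (ω : Ω) : avail B Earr F k ω ≤ B :=
  min_le_right _ _

lemma measurable_carry {n B : ℕ} {F : ℕ → Ω → ℕ}
    (hFm : ∀ k, 1 ≤ k → k ≤ n → Measurable[hist Earr h k] (F k)) :
    ∀ k, k ≤ n → Measurable[hist Earr h k] (carry B Earr F k) := by
  intro k
  induction k with
  | zero => intro _; exact measurable_const
  | succ k ih =>
    intro hk
    have h1 : Measurable[hist Earr h (k+1)] (carry B Earr F k) :=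
      (ih (by omega)).mono (hist_mono (Nat.le_succ k)) le_rfl
    have h2 : Measurable[hist Earr h (k+1)] (Earr (k+1)) := measurable_Earr_hist (by omega)
    have h3 : Measurable[hist Earr h (k+1)] (F (k+1)) := hFm (k+1) (by omega) hk
    have : (carry B Earr F (k+1)) = (fun p : ℕ × ℕ × ℕ => min (p.1 + p.2.1) B - p.2.2)
        ∘ (fun ω => (carry B Earr F k ω, Earr (k+1) ω, F (k+1) ω)) := rfl
    rw [this]
    exact (measurable_of_countable _).comp (h1.prodMk (h2.prodMk h3))

lemma measurable_avail {n B : ℕ} {F : ℕ → Ω → ℕ}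
    (hFm : ∀ k, 1 ≤ k → k ≤ n → Measurable[hist Earr h k] (F k))
    {k : ℕ} (hk1 : 1 ≤ k) (hk : k ≤ n) :
    Measurable[hist Earr h k] (avail B Earr F k) := by
  have h1 : Measurable[hist Earr h k] (carry B Earr F (k-1)) :=
    (measurable_carry hFm (k-1) (by omega)).mono (hist_mono (by omega)) le_rfl
  have h2 : Measurable[hist Earr h k] (Earr k) := measurable_Earr_hist hk1
  have : (avail B Earr F k) = (fun p : ℕ × ℕ => min (p.1 + p.2) B)
      ∘ (fun ω => (carry B Earr F (k-1) ω, Earr k ω)) := rfl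
  rw [this]
  exact (measurable_of_countable _).comp (h1.prodMk h2)

end Carry

section Gamma

variable {φ : Measure ℝ} {B n : ℕ} {pr : ℕ → ℝ}

lemma gammaSlot_rec (hφ : ∀ᵐ x ∂φ, 0 ≤ x) {k m : ℕ} (hk1 : 1 ≤ k) (hkn : k ≤ n) (hm : m ≤ B) :
    gammaSlotD n φ B pr k m = ∑ i ∈ Finset.range (B + 1),
      pr i * ∫ x, alphaD (gammaSlotD n φ B pr (k + 1)) (min (m + i) B) x ∂φ := by
  rcases eq_or_lt_of_le hkn with hkeq | hklt
  · -- k = n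
    have hg : gammaSlotD n φ B pr (k + 1) = fun _ => (0:ℝ) := by
      funext l
      simp [gammaSlotD, show ¬ (k + 1 ≤ n) by omega]
    rw [hg]
    have : gammaSlotD n φ B pr k m = gAuxD φ B pr 0 m := by
      simp [gammaSlotD, hkn, show n - k = 0 by omega]
    rw [this]
    show (∑ i ∈ Finset.range (B + 1),
        pr i * ∫ x, Real.log (1 + x * ((min (m + i) B : ℕ) : ℝ)) ∂φ) = _
    refine Finset.sum_congr rfl fun i _ => ?_
    congr 1
    refine integral_congr_ae ?_
    filter_upwards [hφ] with x hx
    rw [alphaD_zero_of_nonneg _ hx, mul_comm]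
  · -- k < n
    have h1 : gammaSlotD n φ B pr k m = gAuxD φ B pr ((n - (k+1)) + 1) m := by
      have : n - k = (n - (k+1)) + 1 := by omega
      simp [gammaSlotD, hkn, this]
    have h2 : gammaSlotD n φ B pr (k + 1) = gAuxD φ B pr (n - (k+1)) := by
      funext l
      simp [gammaSlotD, Nat.succ_le_of_lt hklt]
    rw [h1, h2]
    show (∑ i ∈ Finset.range (B - m),
        pr i * ∫ x, alphaD (fun l => gAuxD φ B pr (n - (k+1)) l) (i + m) x ∂φ)
        + (∑ i ∈ Finset.Icc (B - m) B, pr i)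
          * ∫ x, alphaD (fun l => gAuxD φ B pr (n - (k+1)) l) B x ∂φ = _
    have hsplit : Finset.range (B + 1) = Finset.range (B - m) ∪ Finset.Ico (B - m) (B + 1) := by
      rw [Finset.range_eq_Ico, Finset.range_eq_Ico]
      exact (Finset.Ico_union_Ico_eq_Ico (a := 0) (b := B - m) (c := B + 1) (by omega) (by omega)).symm
    rw [hsplit, Finset.sum_union]
    · congr 1
      · refine Finset.sum_congr rfl fun i hi => ?_
        have hi' : i < B - m := Finset.mem_range.mp hi
        have : min (m + i) B = i + m := by omega
        rw [this]
      · rw [← Finset.Ico_add_one_right_eq_Icc, Finset.sum_mul]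
        refine Finset.sum_congr rfl fun i hi => ?_
        have hi' : B - m ≤ i := (Finset.mem_Ico.mp hi).1
        have : min (m + i) B = B := by omega
        rw [this]
    · rw [Finset.range_eq_Ico]
      exact Finset.Ico_disjoint_Ico_consecutive 0 (B - m) (B + 1)

lemma gammaSlot_gt (hk : n < k) (m : ℕ) : gammaSlotD n φ B pr k m = 0 := by
  simp [gammaSlotD, Nat.not_le.mpr hk]

end Gamma

section ClaimB

variable {Earr : ℕ → Ω → ℕ} {h : ℕ → Ω → ℝ}

lemma integral_alphaD_step
    (μ : Measure Ω) [IsProbabilityMeasure μ]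
    {n B : ℕ} {pr : ℕ → ℝ} (hpr0 : ∀ i, 0 ≤ pr i)
    (φ : Measure ℝ) [IsProbabilityMeasure φ]
    (hhm : ∀ k, Measurable (h k)) (hEm : ∀ k, Measurable (Earr k))
    (hlaw : ∀ k, 1 ≤ k → k ≤ n → Measure.map (h k) μ = φ)
    (hφ : ∀ᵐ x ∂φ, 0 ≤ x)
    (hint : Integrable (fun x => Real.log (1 + (B : ℝ) * x)) φ)
    (hEB : ∀ k ω, Earr k ω ≤ B)
    (hEpr : ∀ k, 1 ≤ k → k ≤ n → ∀ i, i ≤ B →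
      μ {ω | Earr k ω = i} = ENNReal.ofReal (pr i))
    (hindep : iIndepFun
      (fun (k : Fin n) ω => (Earr (k.1 + 1) ω, h (k.1 + 1) ω)) μ)
    (hpair : ∀ k, 1 ≤ k → k ≤ n → IndepFun (Earr k) (h k) μ)
    {k : ℕ} (hk1 : 1 ≤ k) (hkn : k ≤ n)
    {c : Ω → ℕ} (hc : Measurable[hist Earr h (k - 1)] c) (hcB : ∀ ω, c ω ≤ B) :
    ∫ ω, alphaD (gammaSlotD n φ B pr (k + 1)) (min (c ω + Earr k ω) B) (h k ω) ∂μ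
      = ∫ ω, gammaSlotD n φ B pr k (c ω) ∂μ := by
  classical
  set g : ℕ → ℝ := gammaSlotD n φ B pr (k + 1) with hgdef
  set χc : ℕ → Ω → ℝ := fun m ω => if c ω = m then 1 else 0 with hχc
  set χE : ℕ → Ω → ℝ := fun i ω => if Earr k ω = i then 1 else 0 with hχE
  have hcm : Measurable c := hc.mono (hist_le hEm hhm _) le_rfl
  have hχcm : ∀ m, Measurable (χc m) :=
    fun m => (measurable_of_countable (fun l : ℕ => if l = m then (1:ℝ) else 0)).comp hcm
  have hχEm : ∀ i, Measurable (χE i) :=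
    fun i => (measurable_of_countable (fun l : ℕ => if l = i then (1:ℝ) else 0)).comp (hEm k)
  have hαm : ∀ l, Measurable (fun ω => alphaD g l (h k ω)) :=
    fun l => (measurable_alphaD g l).comp (hhm k)
  have hIαφ : ∀ l, Integrable (alphaD g (min l B)) φ :=
    fun l => integrable_alphaD hφ hint g (min_le_right _ _)
  have hIα : ∀ l, Integrable (fun ω => alphaD g (min l B) (h k ω)) μ := by
    intro l
    have := (hIαφ l)
    rw [← hlaw k hk1 hkn] at this
    exact (integrable_map_measure (measurable_alphaD g _).aestronglyMeasurable
      (hhm k).aemeasurable).mp this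
  have habs : ∀ m i ω, ‖χc m ω * (χE i ω * alphaD g (min (m + i) B) (h k ω))‖
      ≤ ‖alphaD g (min (m + i) B) (h k ω)‖ := by
    intro m i ω
    rw [norm_mul, norm_mul]
    have h1 : ‖χc m ω‖ ≤ 1 := by simp only [hχc]; split <;> simp
    have h2 : ‖χE i ω‖ ≤ 1 := by simp only [hχE]; split <;> simp
    have h3 : (0:ℝ) ≤ ‖alphaD g (min (m + i) B) (h k ω)‖ := norm_nonneg _
    have h4 : ‖χE i ω‖ * ‖alphaD g (min (m + i) B) (h k ω)‖
        ≤ ‖alphaD g (min (m + i) B) (h k ω)‖ := mul_le_of_le_one_left h3 h2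
    have h5 : ‖χc m ω‖ * (‖χE i ω‖ * ‖alphaD g (min (m + i) B) (h k ω)‖)
        ≤ ‖χE i ω‖ * ‖alphaD g (min (m + i) B) (h k ω)‖ :=
      mul_le_of_le_one_left (mul_nonneg (norm_nonneg _) (norm_nonneg _)) h1
    linarith
  have hterm_int : ∀ m i,
      Integrable (fun ω => χc m ω * (χE i ω * alphaD g (min (m + i) B) (h k ω))) μ := by
    intro m i
    refine (hIα (m + i)).norm.mono' ?_ (Filter.Eventually.of_forall (habs m i))
    exact ((hχcm m).mul ((hχEm i).mul (hαm _))).aestronglyMeasurable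
  have hexp : ∀ ω, alphaD g (min (c ω + Earr k ω) B) (h k ω)
      = ∑ m ∈ Finset.range (B + 1), ∑ i ∈ Finset.range (B + 1),
          χc m ω * (χE i ω * alphaD g (min (m + i) B) (h k ω)) := by
    intro ω
    rw [Finset.sum_eq_single (c ω)]
    · rw [Finset.sum_eq_single (Earr k ω)]
      · simp [hχc, hχE]
      · intro b _ hb
        simp [hχE, (Ne.symm hb : Earr k ω ≠ b)]
      · intro hmem
        exact absurd (Finset.mem_range.mpr (by have := hEB k ω; omega)) hmem
    · intro b _ hb
      simp [hχc, (Ne.symm hb : c ω ≠ b)]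
    · intro hmem
      exact absurd (Finset.mem_range.mpr (by have := hcB ω; omega)) hmem
  have hstep : ∀ m ∈ Finset.range (B + 1), ∀ i ∈ Finset.range (B + 1),
      ∫ ω, χc m ω * (χE i ω * alphaD g (min (m + i) B) (h k ω)) ∂μ
        = (μ {ω | c ω = m}).toReal * (pr i * ∫ x, alphaD g (min (m + i) B) x ∂φ) := by
    intro m hm i hi
    have hiB : i ≤ B := Nat.lt_succ_iff.mp (Finset.mem_range.mp hi)
    have hYmeas : Measurable (fun ω => χE i ω * alphaD g (min (m + i) B) (h k ω)) :=
      (hχEm i).mul (hαm _)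
    have hYint : Integrable (fun ω => χE i ω * alphaD g (min (m + i) B) (h k ω)) μ := by
      refine (hIα (m + i)).norm.mono' hYmeas.aestronglyMeasurable
        (Filter.Eventually.of_forall fun ω => ?_)
      rw [norm_mul]
      have h2 : ‖χE i ω‖ ≤ 1 := by simp only [hχE]; split <;> simp
      nlinarith [norm_nonneg (χE i ω), norm_nonneg (alphaD g (min (m + i) B) (h k ω))]
    have hXint : Integrable (χc m) μ := by
      refine (integrable_const (1:ℝ)).mono' (hχcm m).aestronglyMeasurable
        (Filter.Eventually.of_forall fun ω => ?_)
      simp only [hχc]; split <;> simp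
    have hXY : IndepFun (χc m) (fun ω => χE i ω * alphaD g (min (m + i) B) (h k ω)) μ := by
      have hpairk : IndepFun c (fun ω => (Earr k ω, h k ω)) μ :=
        indep_hist_pair hk1 hkn hEm hhm hindep hc
      have hψ1 : Measurable (fun p : ℕ × ℝ => (if p.1 = i then (1:ℝ) else 0)) := by
        exact Measurable.comp (measurable_of_countable fun l : ℕ => if l = i then (1:ℝ) else 0)
          measurable_fst
      have hψ2 : Measurable (fun p : ℕ × ℝ => alphaD g (min (m + i) B) p.2) := by
        exact (measurable_alphaD g _).comp measurable_snd
      exact hpairk.comp (φ := fun l : ℕ => if l = m then (1:ℝ) else 0)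
        (ψ := fun p : ℕ × ℝ => (if p.1 = i then (1:ℝ) else 0) * alphaD g (min (m + i) B) p.2)
        (measurable_of_countable _) (hψ1.mul hψ2)
    show integral μ (χc m * fun ω => χE i ω * alphaD g (min (m + i) B) (h k ω)) = _
    rw [hXY.integral_mul_eq_mul_integral hXint.aestronglyMeasurable hYint.aestronglyMeasurable]
    have h1 : ∫ ω, χc m ω ∂μ = (μ {ω | c ω = m}).toReal := by
      have hs : MeasurableSet {ω | c ω = m} := hcm (measurableSet_singleton m)
      have : χc m = Set.indicator {ω | c ω = m} (fun _ => (1:ℝ)) := by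
        funext ω
        simp only [hχc, Set.indicator_apply, Set.mem_setOf_eq]
      rw [this, integral_indicator_const (1:ℝ) hs, smul_eq_mul, mul_one, measureReal_def]
    have h2 : ∫ ω, χE i ω * alphaD g (min (m + i) B) (h k ω) ∂μ
        = pr i * ∫ x, alphaD g (min (m + i) B) x ∂φ := by
      have hXY2 : IndepFun (χE i) (fun ω => alphaD g (min (m + i) B) (h k ω)) μ :=
        (hpair k hk1 hkn).comp (φ := fun l : ℕ => if l = i then (1:ℝ) else 0)
          (ψ := alphaD g (min (m + i) B)) (measurable_of_countable _) (measurable_alphaD _ _)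
      have hX2int : Integrable (χE i) μ := by
        refine (integrable_const (1:ℝ)).mono' (hχEm i).aestronglyMeasurable
          (Filter.Eventually.of_forall fun ω => ?_)
        simp only [hχE]; split <;> simp
      show integral μ (χE i * fun ω => alphaD g (min (m + i) B) (h k ω)) = _
      rw [hXY2.integral_mul_eq_mul_integral hX2int.aestronglyMeasurable (hIα (m + i)).aestronglyMeasurable]
      have hA : ∫ ω, χE i ω ∂μ = pr i := by
        have hs : MeasurableSet {ω | Earr k ω = i} := (hEm k) (measurableSet_singleton i)
        have : χE i = Set.indicator {ω | Earr k ω = i} (fun _ => (1:ℝ)) := by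
          funext ω
          simp only [hχE, Set.indicator_apply, Set.mem_setOf_eq]
        rw [this, integral_indicator_const (1:ℝ) hs, smul_eq_mul, mul_one, measureReal_def,
          hEpr k hk1 hkn i hiB, ENNReal.toReal_ofReal (hpr0 i)]
      have hB2 : ∫ ω, alphaD g (min (m + i) B) (h k ω) ∂μ
          = ∫ x, alphaD g (min (m + i) B) x ∂φ := by
        rw [← hlaw k hk1 hkn,
          integral_map (hhm k).aemeasurable (measurable_alphaD _ _).aestronglyMeasurable]
      rw [hA, hB2]
    rw [h1, h2]
  -- now compute both sides
  calc ∫ ω, alphaD g (min (c ω + Earr k ω) B) (h k ω) ∂μ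
      = ∫ ω, ∑ m ∈ Finset.range (B + 1), ∑ i ∈ Finset.range (B + 1),
          χc m ω * (χE i ω * alphaD g (min (m + i) B) (h k ω)) ∂μ :=
        integral_congr_ae (Filter.Eventually.of_forall hexp)
    _ = ∑ m ∈ Finset.range (B + 1), ∑ i ∈ Finset.range (B + 1),
          ∫ ω, χc m ω * (χE i ω * alphaD g (min (m + i) B) (h k ω)) ∂μ := by
        rw [integral_finset_sum _ fun m _ => integrable_finset_sum _ fun i _ => hterm_int m i]
        exact Finset.sum_congr rfl fun m _ =>
          integral_finset_sum _ fun i _ => hterm_int m i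
    _ = ∑ m ∈ Finset.range (B + 1), (μ {ω | c ω = m}).toReal *
          ∑ i ∈ Finset.range (B + 1), pr i * ∫ x, alphaD g (min (m + i) B) x ∂φ := by
        refine Finset.sum_congr rfl fun m hm => ?_
        rw [Finset.mul_sum]
        exact Finset.sum_congr rfl fun i hi => hstep m hm i hi
    _ = ∑ m ∈ Finset.range (B + 1), (μ {ω | c ω = m}).toReal * gammaSlotD n φ B pr k m := by
        refine Finset.sum_congr rfl fun m hm => ?_
        rw [gammaSlot_rec hφ hk1 hkn (Nat.lt_succ_iff.mp (Finset.mem_range.mp hm))]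
    _ = ∫ ω, gammaSlotD n φ B pr k (c ω) ∂μ := by
        have hexp2 : ∀ ω, gammaSlotD n φ B pr k (c ω)
            = ∑ m ∈ Finset.range (B + 1), χc m ω * gammaSlotD n φ B pr k m := by
          intro ω
          rw [Finset.sum_eq_single (c ω)]
          · simp [hχc]
          · intro b _ hb
            simp [hχc, (Ne.symm hb : c ω ≠ b)]
          · intro hmem
            exact absurd (Finset.mem_range.mpr (by have := hcB ω; omega)) hmem
        rw [integral_congr_ae (Filter.Eventually.of_forall hexp2)]
        rw [integral_finset_sum]
        · refine Finset.sum_congr rfl fun m hm => ?_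
          rw [integral_mul_const]
          congr 1
          have hs : MeasurableSet {ω | c ω = m} := hcm (measurableSet_singleton m)
          have : χc m = Set.indicator {ω | c ω = m} (fun _ => (1:ℝ)) := by
            funext ω
            simp only [hχc, Set.indicator_apply, Set.mem_setOf_eq]
          rw [this, integral_indicator_const (1:ℝ) hs, smul_eq_mul, mul_one, measureReal_def]
        · intro m _
          refine (integrable_const (|gammaSlotD n φ B pr k m|)).mono'
            ((hχcm m).mul measurable_const).aestronglyMeasurable
            (Filter.Eventually.of_forall fun ω => ?_)
          rw [norm_mul]
          have h2 : ‖χc m ω‖ ≤ 1 := by simp only [hχc]; split <;> simp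
          have := norm_nonneg (χc m ω)
          rw [Real.norm_eq_abs (gammaSlotD n φ B pr k m)]
          nlinarith [abs_nonneg (gammaSlotD n φ B pr k m)]

end ClaimB

section Greedy

variable {Earr : ℕ → Ω → ℕ} {h : ℕ → Ω → ℝ}

lemma argq_exists (g : ℕ → ℝ) (m : ℕ) (x : ℝ) :
    ∃ j, j ≤ m ∧ ∀ j' ≤ m, Real.log (1 + (j' : ℝ) * x) + g (m - j')
      ≤ Real.log (1 + (j : ℝ) * x) + g (m - j) := by
  obtain ⟨b, hb, hmax⟩ := Finset.exists_max_image (Finset.range (m + 1))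
    (fun j => Real.log (1 + (j : ℝ) * x) + g (m - j))
    ⟨0, Finset.mem_range.mpr (Nat.succ_pos m)⟩
  exact ⟨b, Nat.lt_succ_iff.mp (Finset.mem_range.mp hb),
    fun j' hj' => hmax j' (Finset.mem_range.mpr (Nat.lt_succ_of_le hj'))⟩

noncomputable def argq (g : ℕ → ℝ) (m : ℕ) (x : ℝ) : ℕ :=
  Nat.find (argq_exists g m x)

lemma argq_le (g : ℕ → ℝ) (m : ℕ) (x : ℝ) : argq g m x ≤ m := by
  unfold argq
  exact (Nat.find_spec (argq_exists g m x)).1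

lemma argq_spec (g : ℕ → ℝ) (m : ℕ) (x : ℝ) {j : ℕ} (hj : j ≤ m) :
    Real.log (1 + (j : ℝ) * x) + g (m - j)
      ≤ Real.log (1 + (argq g m x : ℝ) * x) + g (m - argq g m x) := by
  unfold argq
  exact (Nat.find_spec (argq_exists g m x)).2 j hj

lemma measurable_argq (g : ℕ → ℝ) (m : ℕ) : Measurable (fun x => argq g m x) := by
  unfold argq
  refine measurable_find _ fun j => ?_
  have : {x : ℝ | j ≤ m ∧ ∀ j' ≤ m,
      Real.log (1 + (j' : ℝ) * x) + g (m - j') ≤ Real.log (1 + (j : ℝ) * x) + g (m - j)}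
      = {x : ℝ | j ≤ m} ∩ ⋂ (j' : ℕ) (_ : j' ≤ m),
        {x : ℝ | Real.log (1 + (j' : ℝ) * x) + g (m - j')
          ≤ Real.log (1 + (j : ℝ) * x) + g (m - j)} := by
    ext x
    simp [Set.mem_iInter]
  rw [this]
  refine MeasurableSet.inter (by by_cases hjm : j ≤ m <;> simp [hjm]) ?_
  refine MeasurableSet.iInter fun j' => MeasurableSet.iInter fun _ => ?_
  exact measurableSet_le
    ((Real.measurable_log.comp (measurable_const.add (measurable_const.mul measurable_id))).add
      measurable_const)
    ((Real.measurable_log.comp (measurable_const.add (measurable_const.mul measurable_id))).add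
      measurable_const)

noncomputable def gCarry (n B : ℕ) (φ : Measure ℝ) (pr : ℕ → ℝ)
    (Earr : ℕ → Ω → ℕ) (h : ℕ → Ω → ℝ) : ℕ → Ω → ℕ
  | 0 => fun _ => 0
  | k + 1 => fun ω =>
      min (gCarry n B φ pr Earr h k ω + Earr (k + 1) ω) B
        - argq (gammaSlotD n φ B pr (k + 2))
            (min (gCarry n B φ pr Earr h k ω + Earr (k + 1) ω) B) (h (k + 1) ω)

noncomputable def gPolicy (n B : ℕ) (φ : Measure ℝ) (pr : ℕ → ℝ)
    (Earr : ℕ → Ω → ℕ) (h : ℕ → Ω → ℝ) (k : ℕ) (ω : Ω) : ℕ :=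
  argq (gammaSlotD n φ B pr (k + 1))
    (min (gCarry n B φ pr Earr h (k - 1) ω + Earr k ω) B) (h k ω)

lemma carry_gPolicy (n B : ℕ) (φ : Measure ℝ) (pr : ℕ → ℝ) (k : ℕ) :
    carry B Earr (gPolicy n B φ pr Earr h) k = gCarry n B φ pr Earr h k := by
  induction k with
  | zero => rfl
  | succ k ih =>
    funext ω
    show min (carry B Earr (gPolicy n B φ pr Earr h) k ω + Earr (k + 1) ω) B
        - gPolicy n B φ pr Earr h (k + 1) ω = _
    rw [ih]
    show _ - argq (gammaSlotD n φ B pr (k + 1 + 1))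
        (min (gCarry n B φ pr Earr h (k + 1 - 1) ω + Earr (k + 1) ω) B) (h (k + 1) ω) = _
    rw [Nat.add_sub_cancel]
    rfl

lemma avail_gPolicy (n B : ℕ) (φ : Measure ℝ) (pr : ℕ → ℝ) (k : ℕ) (ω : Ω) :
    avail B Earr (gPolicy n B φ pr Earr h) k ω
      = min (gCarry n B φ pr Earr h (k - 1) ω + Earr k ω) B := by
  unfold avail
  rw [carry_gPolicy]

lemma measurable_gCarry {n B : ℕ} {φ : Measure ℝ} {pr : ℕ → ℝ} :
    ∀ k, Measurable[hist Earr h k] (gCarry n B φ pr Earr h k) := by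
  intro k
  induction k with
  | zero => exact measurable_const
  | succ k ih =>
    have h1 : Measurable[hist Earr h (k + 1)] (gCarry n B φ pr Earr h k) :=
      ih.mono (hist_mono (Nat.le_succ k)) le_rfl
    have h2 : Measurable[hist Earr h (k + 1)] (Earr (k + 1)) := measurable_Earr_hist (by omega)
    have h3 : Measurable[hist Earr h (k + 1)] (h (k + 1)) := measurable_h_hist (by omega)
    have hΦ : Measurable (fun p : ℝ × (ℕ × ℕ) =>
        min (p.2.1 + p.2.2) B - argq (gammaSlotD n φ B pr (k + 2))
          (min (p.2.1 + p.2.2) B) p.1) := by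
      refine measurable_from_prod_countable_left fun y => ?_
      show Measurable fun x : ℝ => min (y.1 + y.2) B
        - argq (gammaSlotD n φ B pr (k + 2)) (min (y.1 + y.2) B) x
      exact ((measurable_of_countable (fun u => min (y.1 + y.2) B - u)).comp
        (measurable_argq _ _))
    have : gCarry n B φ pr Earr h (k + 1) = (fun p : ℝ × (ℕ × ℕ) =>
        min (p.2.1 + p.2.2) B - argq (gammaSlotD n φ B pr (k + 2))
          (min (p.2.1 + p.2.2) B) p.1)
        ∘ (fun ω => (h (k + 1) ω, (gCarry n B φ pr Earr h k ω, Earr (k + 1) ω))) := rfl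
    rw [this]
    exact hΦ.comp (h3.prodMk (h1.prodMk h2))

lemma gPolicy_isPolicy {n B : ℕ} {φ : Measure ℝ} {pr : ℕ → ℝ} :
    IsPolicy n B Earr h (gPolicy n B φ pr Earr h) := by
  constructor
  · intro k _ _ ω
    rw [avail_gPolicy]
    exact argq_le _ _ _
  · intro k hk1 _
    have h1 : Measurable[hist Earr h k] (gCarry n B φ pr Earr h (k - 1)) :=
      (measurable_gCarry (k - 1)).mono (hist_mono (by omega)) le_rfl
    have h2 : Measurable[hist Earr h k] (Earr k) := measurable_Earr_hist hk1
    have h3 : Measurable[hist Earr h k] (h k) := measurable_h_hist hk1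
    have hΦ : Measurable (fun p : ℝ × (ℕ × ℕ) =>
        argq (gammaSlotD n φ B pr (k + 1)) (min (p.2.1 + p.2.2) B) p.1) := by
      refine measurable_from_prod_countable_left fun y => ?_
      show Measurable fun x : ℝ => argq (gammaSlotD n φ B pr (k + 1)) (min (y.1 + y.2) B) x
      exact measurable_argq _ _
    have : gPolicy n B φ pr Earr h k = (fun p : ℝ × (ℕ × ℕ) =>
        argq (gammaSlotD n φ B pr (k + 1)) (min (p.2.1 + p.2.2) B) p.1)
        ∘ (fun ω => (h k ω, (gCarry n B φ pr Earr h (k - 1) ω, Earr k ω))) := rfl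
    rw [this]
    exact hΦ.comp (h3.prodMk (h1.prodMk h2))

lemma gPolicy_isGreedy {n B : ℕ} {φ : Measure ℝ} {pr : ℕ → ℝ} :
    IsGreedy n B φ pr Earr h (gPolicy n B φ pr Earr h) := by
  intro k hk1 hkn ω j hj
  rw [avail_gPolicy] at hj ⊢
  have hspec := argq_spec (gammaSlotD n φ B pr (k + 1))
    (min (gCarry n B φ pr Earr h (k - 1) ω + Earr k ω) B) (h k ω) hj
  exact hspec

end Greedy

section Main

variable {Earr : ℕ → Ω → ℕ} {h : ℕ → Ω → ℝ}

lemma policy_value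
    (μ : Measure Ω) [IsProbabilityMeasure μ]
    {n B : ℕ} (hn : 1 ≤ n) {pr : ℕ → ℝ} (hpr0 : ∀ i, 0 ≤ pr i)
    (φ : Measure ℝ) [IsProbabilityMeasure φ]
    (hhm : ∀ k, Measurable (h k)) (hEm : ∀ k, Measurable (Earr k))
    (hlaw : ∀ k, 1 ≤ k → k ≤ n → Measure.map (h k) μ = φ)
    (hpos : ∀ k ω, 0 ≤ h k ω)
    (hint : Integrable (fun x => Real.log (1 + (B : ℝ) * x)) φ)
    (hEB : ∀ k ω, Earr k ω ≤ B)
    (hEpr : ∀ k, 1 ≤ k → k ≤ n → ∀ i, i ≤ B →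
      μ {ω | Earr k ω = i} = ENNReal.ofReal (pr i))
    (hindep : iIndepFun
      (fun (k : Fin n) ω => (Earr (k.1 + 1) ω, h (k.1 + 1) ω)) μ)
    (hpair : ∀ k, 1 ≤ k → k ≤ n → IndepFun (Earr k) (h k) μ)
    (F : ℕ → Ω → ℕ) (hF : IsPolicy n B Earr h F) :
    payoff μ n h F ≤ gammaSlotD n φ B pr 1 0 ∧
    (IsGreedy n B φ pr Earr h F → payoff μ n h F = gammaSlotD n φ B pr 1 0) := by
  classical
  obtain ⟨hFle, hFmeas⟩ := hF
  have hφ : ∀ᵐ x ∂φ, 0 ≤ x := by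
    rw [← hlaw n hn le_rfl]
    have : ∀ᵐ y ∂(Measure.map (h n) μ), y ∈ Set.Ici (0:ℝ) :=
      (MeasureTheory.ae_map_iff (hhm n).aemeasurable measurableSet_Ici).mpr
        (Filter.Eventually.of_forall fun ω => hpos n ω)
    filter_upwards [this] with y hy using hy
  have hFm : ∀ j, 1 ≤ j → j ≤ n → Measurable (F j) :=
    fun j h1 h2 => (hFmeas j h1 h2).mono (hist_le hEm hhm j) le_rfl
  have hIlogB : ∀ j, 1 ≤ j → j ≤ n →
      Integrable (fun ω => Real.log (1 + (B : ℝ) * h j ω)) μ := by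
    intro j h1 h2
    have := hint
    rw [← hlaw j h1 h2] at this
    exact (integrable_map_measure
      (Real.measurable_log.comp
        (measurable_const.add (measurable_const.mul measurable_id))).aestronglyMeasurable
      (hhm j).aemeasurable).mp this
  have hIlog : ∀ j, 1 ≤ j → j ≤ n →
      Integrable (fun ω => Real.log (1 + (F j ω : ℝ) * h j ω)) μ := by
    intro j h1 h2
    refine (hIlogB j h1 h2).mono' ?_ (Filter.Eventually.of_forall fun ω => ?_)
    · have hΦ : Measurable (fun p : ℝ × ℕ => Real.log (1 + (p.2 : ℝ) * p.1)) := by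
        refine measurable_from_prod_countable_left fun m => ?_
        show Measurable fun x : ℝ => Real.log (1 + (m : ℝ) * x)
        exact Real.measurable_log.comp (measurable_const.add (measurable_const.mul measurable_id))
      have : (fun ω => Real.log (1 + (F j ω : ℝ) * h j ω))
          = (fun p : ℝ × ℕ => Real.log (1 + (p.2 : ℝ) * p.1))
            ∘ (fun ω => (h j ω, F j ω)) := rfl
      rw [this]
      exact (hΦ.comp ((hhm j).prodMk (hFm j h1 h2))).aestronglyMeasurable
    · have hFB : (F j ω : ℝ) ≤ B := by
        have := le_trans (hFle j h1 h2 ω) (avail_le_B B F j ω)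
        exact_mod_cast this
      have hx := hpos j ω
      have h0 : (0:ℝ) ≤ (F j ω : ℝ) * h j ω := by positivity
      rw [Real.norm_eq_abs, abs_of_nonneg (Real.log_nonneg (by linarith))]
      refine Real.log_le_log (by linarith) ?_
      nlinarith
  have hcarrym : ∀ t, t ≤ n → Measurable (carry B Earr F t) :=
    fun t ht => (measurable_carry hFmeas t ht).mono (hist_le hEm hhm t) le_rfl
  have hIγ : ∀ k t, t ≤ n →
      Integrable (fun ω => gammaSlotD n φ B pr k (carry B Earr F t ω)) μ := by
    intro k t ht
    refine (integrable_const (∑ m ∈ Finset.range (B + 1),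
      |gammaSlotD n φ B pr k m|)).mono'
      ((measurable_of_countable (fun l : ℕ => gammaSlotD n φ B pr k l)).comp
        (hcarrym t ht) : Measurable fun ω => gammaSlotD n φ B pr k (carry B Earr F t ω)
        ).aestronglyMeasurable
      (Filter.Eventually.of_forall fun ω => ?_)
    rw [Real.norm_eq_abs]
    refine Finset.single_le_sum (f := fun m => |gammaSlotD n φ B pr k m|)
      (fun i _ => abs_nonneg _) ?_
    exact Finset.mem_range.mpr (Nat.lt_succ_of_le (carry_le_B B F t ω))
  -- step lemma
  have hstep : ∀ t, t < n →
      ((∫ ω, Real.log (1 + (F (t+1) ω : ℝ) * h (t+1) ω) ∂μ)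
        + ∫ ω, gammaSlotD n φ B pr (t+2) (carry B Earr F (t+1) ω) ∂μ
        ≤ ∫ ω, gammaSlotD n φ B pr (t+1) (carry B Earr F t ω) ∂μ)
      ∧ (IsGreedy n B φ pr Earr h F →
        (∫ ω, Real.log (1 + (F (t+1) ω : ℝ) * h (t+1) ω) ∂μ)
          + ∫ ω, gammaSlotD n φ B pr (t+2) (carry B Earr F (t+1) ω) ∂μ
          = ∫ ω, gammaSlotD n φ B pr (t+1) (carry B Earr F t ω) ∂μ) := by
    intro t ht
    set g : ℕ → ℝ := gammaSlotD n φ B pr (t+2) with hgdef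
    have havail : ∀ ω, avail B Earr F (t+1) ω
        = min (carry B Earr F t ω + Earr (t+1) ω) B := by
      intro ω
      unfold avail
      rw [Nat.add_sub_cancel]
    have hcarry1 : ∀ ω, carry B Earr F (t+1) ω
        = min (carry B Earr F t ω + Earr (t+1) ω) B - F (t+1) ω := fun ω => rfl
    have hptle : ∀ ω, Real.log (1 + (F (t+1) ω : ℝ) * h (t+1) ω)
        + g (carry B Earr F (t+1) ω)
        ≤ alphaD g (min (carry B Earr F t ω + Earr (t+1) ω) B) (h (t+1) ω) := by
      intro ω
      have hj : F (t+1) ω ≤ min (carry B Earr F t ω + Earr (t+1) ω) B := by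
        have := hFle (t+1) (by omega) (by omega) ω
        rwa [havail] at this
      have := le_alphaD g (min (carry B Earr F t ω + Earr (t+1) ω) B) (h (t+1) ω) hj
      rwa [← hcarry1] at this
    have hpteq : IsGreedy n B φ pr Earr h F → ∀ ω,
        Real.log (1 + (F (t+1) ω : ℝ) * h (t+1) ω) + g (carry B Earr F (t+1) ω)
        = alphaD g (min (carry B Earr F t ω + Earr (t+1) ω) B) (h (t+1) ω) := by
      intro hG ω
      refine le_antisymm (hptle ω) ?_
      refine alphaD_le _ _ _ fun j hj => ?_
      have := hG (t+1) (by omega) (by omega) ω j (by rwa [havail])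
      rw [havail] at this
      rw [hcarry1]
      exact this
    -- integrability of the alphaD composite
    have hIα' : ∀ l, l ≤ B → Integrable (fun ω => alphaD g l (h (t+1) ω)) μ := by
      intro l hl
      have := integrable_alphaD hφ hint g (show min l B ≤ B from min_le_right _ _)
      rw [min_eq_left hl] at this
      rw [← hlaw (t+1) (by omega) (by omega)] at this
      exact (integrable_map_measure (measurable_alphaD g l).aestronglyMeasurable
        (hhm (t+1)).aemeasurable).mp this
    have hIαc : Integrable (fun ω =>
        alphaD g (min (carry B Earr F t ω + Earr (t+1) ω) B) (h (t+1) ω)) μ := by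
      refine (integrable_finset_sum (Finset.range (B+1))
        (fun l hl => (hIα' l (Nat.lt_succ_iff.mp (Finset.mem_range.mp hl))).norm)).mono'
        ?_ (Filter.Eventually.of_forall fun ω => ?_)
      · have hΦ : Measurable (fun p : ℝ × ℕ => alphaD g (min p.2 B) p.1) := by
          refine measurable_from_prod_countable_left fun l => ?_
          exact measurable_alphaD g (min l B)
        have : (fun ω => alphaD g (min (carry B Earr F t ω + Earr (t+1) ω) B) (h (t+1) ω))
            = (fun p : ℝ × ℕ => alphaD g (min p.2 B) p.1)
              ∘ (fun ω => (h (t+1) ω, carry B Earr F t ω + Earr (t+1) ω)) := rfl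
        rw [this]
        exact (hΦ.comp ((hhm (t+1)).prodMk
          ((hcarrym t (by omega)).add (hEm (t+1))))).aestronglyMeasurable
      · rw [Real.norm_eq_abs, ← Real.norm_eq_abs]
        refine Finset.single_le_sum
          (f := fun l => ‖alphaD g l (h (t+1) ω)‖) (fun i _ => norm_nonneg _) ?_
        exact Finset.mem_range.mpr (by
          have : min (carry B Earr F t ω + Earr (t+1) ω) B ≤ B := min_le_right _ _
          omega)
    have hcmeas : Measurable[hist Earr h ((t+1) - 1)] (carry B Earr F t) := by
      have := measurable_carry (B := B) (h := h) hFmeas t (by omega)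
      simpa using this
    have haeq := integral_alphaD_step μ hpr0 φ hhm hEm hlaw hφ hint hEB hEpr hindep hpair
      (k := t+1) (by omega) (by omega) (c := carry B Earr F t) hcmeas (carry_le_B B F t)
    have hIl := hIlog (t+1) (by omega) (by omega)
    have hIg2 := hIγ (t+2) (t+1) (by omega)
    have hIg1 := hIγ (t+1) t (by omega)
    have hadd : (∫ ω, Real.log (1 + (F (t+1) ω : ℝ) * h (t+1) ω) ∂μ)
        + ∫ ω, gammaSlotD n φ B pr (t+2) (carry B Earr F (t+1) ω) ∂μ
        = ∫ ω, (Real.log (1 + (F (t+1) ω : ℝ) * h (t+1) ω)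
            + g (carry B Earr F (t+1) ω)) ∂μ :=
      (integral_add hIl hIg2).symm
    constructor
    · rw [hadd]
      calc ∫ ω, (Real.log (1 + (F (t+1) ω : ℝ) * h (t+1) ω)
            + g (carry B Earr F (t+1) ω)) ∂μ
          ≤ ∫ ω, alphaD g (min (carry B Earr F t ω + Earr (t+1) ω) B) (h (t+1) ω) ∂μ :=
            integral_mono (hIl.add hIg2) hIαc hptle
        _ = ∫ ω, gammaSlotD n φ B pr (t+1) (carry B Earr F t ω) ∂μ := haeq
    · intro hG
      rw [hadd]
      calc ∫ ω, (Real.log (1 + (F (t+1) ω : ℝ) * h (t+1) ω)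
            + g (carry B Earr F (t+1) ω)) ∂μ
          = ∫ ω, alphaD g (min (carry B Earr F t ω + Earr (t+1) ω) B) (h (t+1) ω) ∂μ :=
            integral_congr_ae (Filter.Eventually.of_forall (hpteq hG))
        _ = ∫ ω, gammaSlotD n φ B pr (t+1) (carry B Earr F t ω) ∂μ := haeq
  -- telescoping
  have main : ∀ t, t ≤ n →
      ((∫ ω, ∑ j ∈ Finset.Icc 1 t, Real.log (1 + (F j ω : ℝ) * h j ω) ∂μ)
        + ∫ ω, gammaSlotD n φ B pr (t+1) (carry B Earr F t ω) ∂μ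
          ≤ gammaSlotD n φ B pr 1 0)
      ∧ (IsGreedy n B φ pr Earr h F →
        (∫ ω, ∑ j ∈ Finset.Icc 1 t, Real.log (1 + (F j ω : ℝ) * h j ω) ∂μ)
          + ∫ ω, gammaSlotD n φ B pr (t+1) (carry B Earr F t ω) ∂μ
            = gammaSlotD n φ B pr 1 0) := by
    intro t
    induction t with
    | zero =>
      intro _
      have hbase : (∫ ω, ∑ j ∈ Finset.Icc 1 0, Real.log (1 + (F j ω : ℝ) * h j ω) ∂μ)
          + ∫ ω, gammaSlotD n φ B pr (0+1) (carry B Earr F 0 ω) ∂μ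
          = gammaSlotD n φ B pr 1 0 := by
        have h1 : (∫ ω, ∑ j ∈ Finset.Icc 1 0, Real.log (1 + (F j ω : ℝ) * h j ω) ∂μ) = 0 := by
          simp
        have h2 : (∫ ω, gammaSlotD n φ B pr (0+1) (carry B Earr F 0 ω) ∂μ)
            = gammaSlotD n φ B pr 1 0 := by
          have : ∀ ω, gammaSlotD n φ B pr (0+1) (carry B Earr F 0 ω)
              = gammaSlotD n φ B pr 1 0 := fun ω => rfl
          rw [integral_congr_ae (Filter.Eventually.of_forall this), integral_const]
          simp
        rw [h1, h2, zero_add]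
      exact ⟨le_of_eq hbase, fun _ => hbase⟩
    | succ t ih =>
      intro ht
      have ih' := ih (by omega)
      have hs := hstep t (by omega)
      have hsplit : (∫ ω, ∑ j ∈ Finset.Icc 1 (t+1),
            Real.log (1 + (F j ω : ℝ) * h j ω) ∂μ)
          = (∫ ω, ∑ j ∈ Finset.Icc 1 t, Real.log (1 + (F j ω : ℝ) * h j ω) ∂μ)
            + ∫ ω, Real.log (1 + (F (t+1) ω : ℝ) * h (t+1) ω) ∂μ := by
        have h1 : ∀ ω, ∑ j ∈ Finset.Icc 1 (t+1), Real.log (1 + (F j ω : ℝ) * h j ω)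
            = (∑ j ∈ Finset.Icc 1 t, Real.log (1 + (F j ω : ℝ) * h j ω))
              + Real.log (1 + (F (t+1) ω : ℝ) * h (t+1) ω) := by
          intro ω
          exact Finset.sum_Icc_succ_top (by omega) _
        rw [integral_congr_ae (Filter.Eventually.of_forall h1)]
        refine integral_add ?_ (hIlog (t+1) (by omega) (by omega))
        refine integrable_finset_sum _ fun j hj => ?_
        have hj' := Finset.mem_Icc.mp hj
        exact hIlog j (by omega) (by omega)
      constructor
      · have h1 := hs.1
        have h2 := ih'.1
        rw [hsplit]
        linarith
      · intro hG
        have h1 := hs.2 hG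
        have h2 := ih'.2 hG
        rw [hsplit]
        linarith
  -- conclude
  have hzero : ∫ ω, gammaSlotD n φ B pr (n+1) (carry B Earr F n ω) ∂μ = 0 := by
    have : ∀ ω, gammaSlotD n φ B pr (n+1) (carry B Earr F n ω) = 0 :=
      fun ω => gammaSlot_gt (by omega) _
    rw [integral_congr_ae (Filter.Eventually.of_forall this), integral_zero]
  have hm := main n le_rfl
  rw [hzero] at hm
  constructor
  · have := hm.1
    unfold payoff
    linarith
  · intro hG
    have := hm.2 hG
    unfold payoff
    linarith

end Main

end Aux

/-- **Theorem 2** (single node, general discrete model). There is an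
admissible greedy policy `F*` (transmitting, at each slot, an amount `q`
attaining `max_{j ≤ U_k} (log (1 + j·h_k) + γ_{k+1}^{U_k - j})`), and every
such policy maximizes the expected total payoff among admissible policies. -/
theorem greedy_policy_optimal
    (μ : Measure Ω) [IsProbabilityMeasure μ]
    (n B : ℕ) (hn : 1 ≤ n) (hB : 1 ≤ B)
    (pr : ℕ → ℝ) (hpr0 : ∀ i, 0 ≤ pr i)
    (hprsum : ∑ i ∈ Finset.range (B + 1), pr i = 1)
    (φ : Measure ℝ) [IsProbabilityMeasure φ]
    (h : ℕ → Ω → ℝ) (Earr : ℕ → Ω → ℕ)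
    (hhm : ∀ k, Measurable (h k)) (hEm : ∀ k, Measurable (Earr k))
    (hlaw : ∀ k, 1 ≤ k → k ≤ n → Measure.map (h k) μ = φ)
    (hpos : ∀ k ω, 0 ≤ h k ω)
    (hint : Integrable (fun x => Real.log (1 + (B : ℝ) * x)) φ)
    (hEB : ∀ k ω, Earr k ω ≤ B)
    (hEpr : ∀ k, 1 ≤ k → k ≤ n → ∀ i, i ≤ B →
      μ {ω | Earr k ω = i} = ENNReal.ofReal (pr i))
    (hindep : iIndepFun
      (fun (k : Fin n) ω => (Earr (k.1 + 1) ω, h (k.1 + 1) ω)) μ)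
    (hpair : ∀ k, 1 ≤ k → k ≤ n → IndepFun (Earr k) (h k) μ) :
    (∃ Fstar : ℕ → Ω → ℕ, IsPolicy n B Earr h Fstar ∧ IsGreedy n B φ pr Earr h Fstar) ∧
    (∀ Fstar : ℕ → Ω → ℕ, IsPolicy n B Earr h Fstar → IsGreedy n B φ pr Earr h Fstar →
      ∀ F : ℕ → Ω → ℕ, IsPolicy n B Earr h F →
        payoff μ n h F ≤ payoff μ n h Fstar) := by
  constructor
  · exact ⟨gPolicy n B φ pr Earr h, gPolicy_isPolicy, gPolicy_isGreedy⟩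
  · intro Fstar hP hG F hFp
    have h1 := policy_value μ hn hpr0 φ hhm hEm hlaw hpos hint hEB hEpr hindep hpair F hFp
    have h2 := policy_value μ hn hpr0 φ hhm hEm hlaw hpos hint hEB hEpr hindep hpair Fstar hP
    rw [h2.2 hG]
    exact h1.1

end EHDiscrete
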